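/- Let G be a permutation group on a finite set Ω. G has the (2,l)-universal transversal property if and only if for every orbital graph Γ of G (a graph on Ω whose edge set is a G-orbit of 2-subsets of Ω), the induced subgraph of Γ on any l-subset of Ω is connected. -/

import Mathlib

variable {Ω : Type*} [Fintype Ω] [DecidableEq Ω]

/-- `P` is a partition of the finite set `B` into exactly `k` nonempty parts. -/
def IsKPartition (P : Finset (Finset Ω)) (B : Finset Ω) (k : ℕ) : Prop :=
  P.card = k ∧ (∀ p ∈ P, p.Nonempty) ∧
    (∀ p ∈ P, ∀ q ∈ P, p ≠ q → Disjoint p q) ∧ P.biUnion id = B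

/-- `G` has the `(k,l)`-universal transversal property. -/
def HasUT (G : Subgroup (Equiv.Perm Ω)) (k l : ℕ) : Prop :=
  ∀ A B : Finset Ω, A.card = k → B.card = l →
    ∀ P : Finset (Finset Ω), IsKPartition P B k →
      ∃ g ∈ G, ∀ p ∈ P, ((A.image g) ∩ p).card = 1

/-- `G` is `m`-homogeneous. -/
def IsHomogeneous (G : Subgroup (Equiv.Perm Ω)) (m : ℕ) : Prop :=
  ∀ A B : Finset Ω, A.card = m → B.card = m → ∃ g ∈ G, A.image g = B

/-- The orbital graph of `G` whose edge set is the `G`-orbit of the `2`-subset `A₀`. -/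
def orbitalGraph (G : Subgroup (Equiv.Perm Ω)) (A₀ : Finset Ω) : SimpleGraph Ω where
  Adj x y := x ≠ y ∧ ∃ g ∈ G, A₀.image g = {x, y}
  symm := by
    constructor
    intro x y ⟨hxy, g, hg, him⟩
    exact ⟨hxy.symm, g, hg, by rwa [Finset.pair_comm y x]⟩
  loopless := by constructor; intro x ⟨h, _⟩; exact h rfl

lemma exists_crossing_adj {α : Type*} (H : SimpleGraph α) (p : α → Prop) :
    ∀ {u v : α}, H.Walk u v → p u → ¬ p v → ∃ x y, H.Adj x y ∧ p x ∧ ¬ p y := by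
  intro u v w
  induction w with
  | nil => intro hu hv; exact absurd hu hv
  | @cons a b c hab w ih =>
    intro hu hv
    by_cases hb : p b
    · exact ih hb hv
    · exact ⟨a, b, hab, hu, hb⟩

lemma pair_inter_one_left {x y : Ω} {p : Finset Ω} (hx : x ∈ p) (hy : y ∉ p) :
    (({x, y} : Finset Ω) ∩ p).card = 1 := by
  have : ({x, y} : Finset Ω) ∩ p = {x} := by
    ext z
    simp only [Finset.mem_inter, Finset.mem_insert, Finset.mem_singleton]
    constructor
    · rintro ⟨rfl | rfl, hz⟩
      · rfl
      · exact absurd hz hy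
    · rintro rfl; exact ⟨Or.inl rfl, hx⟩
  rw [this, Finset.card_singleton]

theorem ut_two_iff_induced_connected (G : Subgroup (Equiv.Perm Ω)) (l : ℕ)
    (hl : 2 ≤ l) (hln : l ≤ Fintype.card Ω) :
    HasUT G 2 l ↔
      ∀ A₀ : Finset Ω, A₀.card = 2 → ∀ B : Finset Ω, B.card = l →
        ((orbitalGraph G A₀).induce (B : Set Ω)).Connected := by
  classical
  constructor
  · -- UT → connected
    intro hUT A₀ hA₀ B hB
    have hBne : B.Nonempty := Finset.card_pos.mp (by omega)
    rw [SimpleGraph.connected_iff]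
    refine ⟨?_, by obtain ⟨b, hb⟩ := hBne; exact ⟨⟨b, hb⟩⟩⟩
    intro u v
    by_contra hreach
    set H := (orbitalGraph G A₀).induce (B : Set Ω) with hH
    set q : Ω → Prop := fun x => ∃ hx : x ∈ (B : Set Ω), H.Reachable u ⟨x, hx⟩ with hq
    set P₁ : Finset Ω := B.filter q with hP₁
    set P₂ : Finset Ω := B \ P₁ with hP₂
    have hP₁B : P₁ ⊆ B := Finset.filter_subset _ _
    have huP₁ : (u : Ω) ∈ P₁ := by
      refine Finset.mem_filter.mpr ⟨u.2, u.2, ?_⟩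
      exact SimpleGraph.Reachable.refl _
    have hvP₂ : (v : Ω) ∈ P₂ := by
      refine Finset.mem_sdiff.mpr ⟨v.2, ?_⟩
      intro hv
      obtain ⟨_, hr⟩ := (Finset.mem_filter.mp hv).2
      exact hreach hr
    have hdisj : Disjoint P₁ P₂ := Finset.disjoint_sdiff
    have hP₁₂ : P₁ ≠ P₂ := by
      intro h
      exact (Finset.mem_sdiff.mp (h ▸ huP₁)).2 huP₁
    have hpart : IsKPartition ({P₁, P₂} : Finset (Finset Ω)) B 2 := by
      refine ⟨?_, ?_, ?_, ?_⟩
      · rw [Finset.card_insert_of_notMem (by simpa using hP₁₂), Finset.card_singleton]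
      · intro p hp
        rcases Finset.mem_insert.mp hp with rfl | hp
        · exact ⟨u, huP₁⟩
        · rw [Finset.mem_singleton.mp hp]; exact ⟨v, hvP₂⟩
      · intro p hp q' hq' hne
        rcases Finset.mem_insert.mp hp with rfl | hp <;>
          rcases Finset.mem_insert.mp hq' with rfl | hq'
        · exact absurd rfl hne
        · rw [Finset.mem_singleton.mp hq']; exact hdisj
        · rw [Finset.mem_singleton.mp hp]; exact hdisj.symm
        · rw [Finset.mem_singleton.mp hp, Finset.mem_singleton.mp hq'] at hne
          exact absurd rfl hne
      · rw [Finset.biUnion_insert, Finset.singleton_biUnion, id, id]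
        exact Finset.union_sdiff_of_subset hP₁B
    obtain ⟨g, hg, hmeet⟩ := hUT A₀ B hA₀ hB _ hpart
    have h1 : ((A₀.image g) ∩ P₁).card = 1 := hmeet P₁ (Finset.mem_insert_self _ _)
    have h2 : ((A₀.image g) ∩ P₂).card = 1 :=
      hmeet P₂ (Finset.mem_insert_of_mem (Finset.mem_singleton_self _))
    obtain ⟨x, hx⟩ := Finset.card_eq_one.mp h1
    obtain ⟨y, hy⟩ := Finset.card_eq_one.mp h2
    have hxm : x ∈ A₀.image g ∧ x ∈ P₁ := by
      have := hx ▸ Finset.mem_singleton_self x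
      exact Finset.mem_inter.mp this
    have hym : y ∈ A₀.image g ∧ y ∈ P₂ := by
      have := hy ▸ Finset.mem_singleton_self y
      exact Finset.mem_inter.mp this
    have hxy : x ≠ y := by
      intro h
      exact (Finset.disjoint_left.mp hdisj) hxm.2 (h ▸ hym.2)
    have hcard : (A₀.image g).card = 2 := by
      rw [Finset.card_image_of_injective _ (Equiv.injective g), hA₀]
    have himg : A₀.image (⇑g) = {x, y} := by
      refine (Finset.eq_of_subset_of_card_le ?_ ?_).symm
      · intro z hz
        rcases Finset.mem_insert.mp hz with rfl | hz
        · exact hxm.1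
        · rw [Finset.mem_singleton.mp hz]; exact hym.1
      · rw [hcard, Finset.card_insert_of_notMem (by simpa using hxy),
          Finset.card_singleton]
    have hadj : (orbitalGraph G A₀).Adj x y := ⟨hxy, g, hg, himg⟩
    have hxB : x ∈ B := hP₁B hxm.2
    have hyB : y ∈ B := (Finset.mem_sdiff.mp hym.2).1
    have hxq : q x := (Finset.mem_filter.mp hxm.2).2
    obtain ⟨hxB', hrx⟩ := hxq
    have hadj' : H.Adj ⟨x, hxB'⟩ ⟨y, hyB⟩ := hadj
    have hry : H.Reachable u ⟨y, hyB⟩ := hrx.trans hadj'.reachable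
    have : y ∈ P₁ := Finset.mem_filter.mpr ⟨hyB, hyB, hry⟩
    exact (Finset.mem_sdiff.mp hym.2).2 this
  · -- connected → UT
    intro hconn A B hA hB P hpart
    obtain ⟨hPcard, hPne, hPdisj, hPun⟩ := hpart
    obtain ⟨P₁, P₂, hP₁₂, rfl⟩ := Finset.card_eq_two.mp hPcard
    have hP₁ : P₁ ∈ ({P₁, P₂} : Finset (Finset Ω)) := Finset.mem_insert_self _ _
    have hP₂ : P₂ ∈ ({P₁, P₂} : Finset (Finset Ω)) :=
      Finset.mem_insert_of_mem (Finset.mem_singleton_self _)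
    have hdisj : Disjoint P₁ P₂ := hPdisj P₁ hP₁ P₂ hP₂ hP₁₂
    have hun : P₁ ∪ P₂ = B := by
      rw [← hPun, Finset.biUnion_insert, Finset.singleton_biUnion, id, id]
    obtain ⟨a, ha⟩ := hPne P₁ hP₁
    obtain ⟨b, hb⟩ := hPne P₂ hP₂
    have haB : a ∈ B := hun ▸ Finset.mem_union_left _ ha
    have hbB : b ∈ B := hun ▸ Finset.mem_union_right _ hb
    have hc := hconn A hA B hB
    obtain ⟨w⟩ := hc.preconnected ⟨a, haB⟩ ⟨b, hbB⟩
    obtain ⟨x, y, hadj, hxp, hyp⟩ :=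
      exists_crossing_adj _ (fun z : (B : Set Ω) => (z : Ω) ∈ P₁) w ha
        (fun h => (Finset.disjoint_left.mp hdisj) h hb)
    have hadj' : (orbitalGraph G A).Adj x y := hadj
    obtain ⟨hxy, g, hg, himg⟩ := hadj'
    have hyP₂ : (y : Ω) ∈ P₂ := by
      have : (y : Ω) ∈ P₁ ∪ P₂ := hun ▸ y.2
      rcases Finset.mem_union.mp this with h | h
      · exact absurd h hyp
      · exact h
    refine ⟨g, hg, ?_⟩
    intro p hp
    rcases Finset.mem_insert.mp hp with rfl | hp
    · rw [himg]; exact pair_inter_one_left hxp hyp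
    · rw [Finset.mem_singleton.mp hp, himg, Finset.pair_comm]
      exact pair_inter_one_left hyP₂ (fun h => (Finset.disjoint_left.mp hdisj) hxp h)
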